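/- Let (Ω, 𝒜, ℙ) be a probability space and let X, Y : Ω → ℝ be random variables. Then the supremum of Corr[g(X), h(Y)] over all admissible comonotone pairs (g, h) equals the supremum, over all Borel functions k : ℝ → ℝ and all nondecreasing functions h₁, h₂ : ℝ → ℝ such that the pair (h₁ ∘ k, h₂ ∘ k) is admissible, of Corr[h₁(k(X)), h₂(k(Y))]. -/

import Mathlib

open MeasureTheory ProbabilityTheory

/-- The Pearson correlation coefficient of two real-valued random variables. -/
noncomputable def corr {Ω : Type*} [MeasurableSpace Ω] (P : Measure Ω) (U V : Ω → ℝ) : ℝ :=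
  (∫ ω, (U ω - ∫ ω', U ω' ∂P) * (V ω - ∫ ω', V ω' ∂P) ∂P) /
    (Real.sqrt (variance U P) * Real.sqrt (variance V P))

/-- A pair `(g, h)` of Borel functions is admissible for `(X, Y)` if `g ∘ X` and `h ∘ Y`
both have finite, strictly positive variance. -/
def Admissible {Ω : Type*} [MeasurableSpace Ω] (P : Measure Ω) (X Y : Ω → ℝ)
    (g h : ℝ → ℝ) : Prop :=
  Measurable g ∧ Measurable h ∧
    MemLp (fun ω => g (X ω)) 2 P ∧ MemLp (fun ω => h (Y ω)) 2 P ∧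
    0 < variance (fun ω => g (X ω)) P ∧ 0 < variance (fun ω => h (Y ω)) P

/-- Two functions are comonotone if increments always agree in sign. -/
def Comonotone {α : Type*} (g h : α → ℝ) : Prop :=
  ∀ x x', 0 ≤ (g x - g x') * (h x - h x')

/-- A comonotone pair `(g,h)` factors: `g` is a monotone function of `g + h`. -/
lemma comono_rep (g h : ℝ → ℝ) (hc : Comonotone g h) :
    ∃ h₁ : ℝ → ℝ, Monotone h₁ ∧ ∀ x, h₁ (g x + h x) = g x := by
  set k : ℝ → ℝ := fun x => g x + h x with hk
  have mono : ∀ x x', k x' ≤ k x → g x' ≤ g x := by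
    intro x x' hkle
    by_contra hgt
    push_neg at hgt
    have h1 := hc x' x
    have hh : h x ≤ h x' := by nlinarith
    have : k x < k x' := by simp only [hk]; linarith
    linarith
  have bdd : ∀ t, BddAbove (g '' {x | k x ≤ t}) := by
    intro t
    rcases Set.eq_empty_or_nonempty {x | k x ≤ t} with he | ⟨x₀, hx₀⟩
    · rw [he]; simp
    · refine ⟨max (g x₀) (t - h x₀), ?_⟩
      rintro y ⟨x, hx, rfl⟩
      by_contra hgt
      push_neg at hgt
      have hg0 : g x₀ < g x := lt_of_le_of_lt (le_max_left _ _) hgt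
      have h1 := hc x x₀
      have hh : h x₀ ≤ h x := by nlinarith
      have : t < k x := by
        simp only [hk]
        have := lt_of_le_of_lt (le_max_right _ _) hgt
        linarith
      exact absurd hx (by simpa using not_le.mpr this)
  classical
  refine ⟨fun t => if ht : ({x | k x ≤ t}).Nonempty then sSup (g '' {x | k x ≤ t})
      else sInf (Set.range g), ?_, ?_⟩
  · intro a b hab
    dsimp only
    by_cases ha : ({x | k x ≤ a}).Nonempty
    · have hb : ({x | k x ≤ b}).Nonempty := ha.mono fun x hx => le_trans hx hab
      rw [dif_pos ha, dif_pos hb]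
      exact csSup_le_csSup (bdd b) (ha.image g)
        (Set.image_mono fun x hx => le_trans hx hab)
    · rw [dif_neg ha]
      have hblow : BddBelow (Set.range g) := by
        refine ⟨min (g 0) (a - h 0), ?_⟩
        rintro y ⟨x, rfl⟩
        by_contra hlt
        push_neg at hlt
        have hg0 : g x < g 0 := lt_of_lt_of_le hlt (min_le_left _ _)
        have h1 := hc x 0
        have hh : h x ≤ h 0 := by nlinarith
        have : k x < a := by
          simp only [hk]
          have := lt_of_lt_of_le hlt (min_le_right _ _)
          linarith
        exact ha ⟨x, le_of_lt this⟩
      by_cases hb : ({x | k x ≤ b}).Nonempty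
      · rw [dif_pos hb]
        obtain ⟨x₀, hx₀⟩ := hb
        calc sInf (Set.range g) ≤ g x₀ := csInf_le hblow ⟨x₀, rfl⟩
          _ ≤ sSup (g '' {x | k x ≤ b}) := le_csSup (bdd b) ⟨x₀, hx₀, rfl⟩
      · rw [dif_neg hb]
  · intro x
    dsimp only
    have hne : ({x' | k x' ≤ k x}).Nonempty := ⟨x, show k x ≤ k x from le_rfl⟩
    rw [dif_pos hne]
    refine le_antisymm ?_ (le_csSup (bdd _) ⟨x, show k x ≤ k x from le_rfl, rfl⟩)
    refine csSup_le (hne.image g) ?_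
    rintro y ⟨x', hx', rfl⟩
    exact mono x x' hx'

theorem co_correlation_eq_sup_over_common_factor
    {Ω : Type*} [MeasurableSpace Ω] (P : Measure Ω) [IsProbabilityMeasure P]
    (X Y : Ω → ℝ) (hX : Measurable X) (hY : Measurable Y) :
    sSup {r : ℝ | ∃ g h : ℝ → ℝ, Admissible P X Y g h ∧ Comonotone g h ∧
        r = corr P (fun ω => g (X ω)) (fun ω => h (Y ω))} =
      sSup {r : ℝ | ∃ k h₁ h₂ : ℝ → ℝ, Measurable k ∧ Monotone h₁ ∧ Monotone h₂ ∧
        Admissible P X Y (h₁ ∘ k) (h₂ ∘ k) ∧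
        r = corr P (fun ω => h₁ (k (X ω))) (fun ω => h₂ (k (Y ω)))} := by
  congr 1
  ext r
  constructor
  · rintro ⟨g, h, hadm, hcom, rfl⟩
    obtain ⟨h₁, mh₁, e₁⟩ := comono_rep g h hcom
    have hcom' : Comonotone h g := fun x x' => by
      have := hcom x x'; nlinarith
    obtain ⟨h₂, mh₂, e₂⟩ := comono_rep h g hcom'
    have e₂' : ∀ x, h₂ (g x + h x) = h x := fun x => by rw [add_comm]; exact e₂ x
    have hg : (h₁ ∘ fun x => g x + h x) = g := funext fun x => e₁ x
    have hh : (h₂ ∘ fun x => g x + h x) = h := funext fun x => e₂' x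
    refine ⟨fun x => g x + h x, h₁, h₂, hadm.1.add hadm.2.1, mh₁, mh₂, ?_, ?_⟩
    · rw [hg, hh]; exact hadm
    · congr 1
      · exact funext fun ω => (e₁ (X ω)).symm
      · exact funext fun ω => (e₂' (Y ω)).symm
  · rintro ⟨k, h₁, h₂, hk, m1, m2, hadm, rfl⟩
    refine ⟨h₁ ∘ k, h₂ ∘ k, hadm, ?_, rfl⟩
    intro x x'
    rcases le_total (k x') (k x) with hle | hle
    · exact mul_nonneg (sub_nonneg.2 (m1 hle)) (sub_nonneg.2 (m2 hle))
    · exact mul_nonneg_of_nonpos_of_nonpos (sub_nonpos.2 (m1 hle)) (sub_nonpos.2 (m2 hle))
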